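/- Each of the four vector fields η₁, η₂, η₃, η₄ is a Killing vector field of the McLenaghan–Tariq–Tupper metric: for each a ∈ {1,2,3,4} and all indices i, j ∈ {1,2,3,4}, Σ_k ( η_a^k ∂_k g_{ij} + g_{kj} ∂_i η_a^k + g_{ik} ∂_j η_a^k ) = 0 identically on ℝ⁴. -/

import Mathlib

/-- Partial derivative `∂f/∂xⁱ` of a real-valued function on `ℝ⁴`. -/
noncomputable def pd (i : Fin 4) (f : (Fin 4 → ℝ) → ℝ) (x : Fin 4 → ℝ) : ℝ :=
  fderiv ℝ f x (Pi.single i 1)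
/-- The McLenaghan–Tariq–Tupper metric components `g_{ij}(x)` (indices `0,…,3` for `1,…,4`). -/
noncomputable def mttMetric (k : ℝ) (x : Fin 4 → ℝ) : Matrix (Fin 4) (Fin 4) ℝ :=
  !![1, 1, 0, -k * x 2;
     1, 0, 0, -k * x 2;
     0, 0, -Real.exp (-(k * x 1)), 0;
     -k * x 2, -k * x 2, 0, k ^ 2 * (x 2) ^ 2 - Real.exp (k * x 1)]
/-- The Killing vector fields `η₁,…,η₄` (indices `0,…,3`). -/
noncomputable def η (k : ℝ) (a : Fin 4) (x : Fin 4 → ℝ) : Fin 4 → ℝ :=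
  ![![1, 0, 0, 0],
    ![0, 0, 0, 1],
    ![k * x 3, 0, 1, 0],
    ![-2, 1, k / 2 * x 2, -(k / 2) * x 3]] a


lemma hasFDerivAt_coord (m : Fin 4) (x : Fin 4 → ℝ) :
    HasFDerivAt (fun y : Fin 4 → ℝ => y m)
      (ContinuousLinearMap.proj (R := ℝ) (φ := fun _ : Fin 4 => ℝ) m) x := by
  exact (ContinuousLinearMap.proj (R := ℝ) (φ := fun _ : Fin 4 => ℝ) m).hasFDerivAt

lemma pd_of_hasFDerivAt {f : (Fin 4 → ℝ) → ℝ} {f' : (Fin 4 → ℝ) →L[ℝ] ℝ}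
    {x : Fin 4 → ℝ} (h : HasFDerivAt f f' x) (l : Fin 4) :
    pd l f x = f' (Pi.single l 1) := by
  rw [pd, h.fderiv]

lemma pd_const (l : Fin 4) (c : ℝ) (x : Fin 4 → ℝ) : pd l (fun _ => c) x = 0 := by
  rw [pd_of_hasFDerivAt (hasFDerivAt_const c x) l]; simp

lemma pd_cmul (l m : Fin 4) (c : ℝ) (x : Fin 4 → ℝ) :
    pd l (fun y => c * y m) x = if l = m then c else 0 := by
  rw [pd_of_hasFDerivAt ((hasFDerivAt_coord m x).const_mul c) l]
  simp [Pi.single_apply, eq_comm]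

lemma pd_neg_cmul (l m : Fin 4) (c : ℝ) (x : Fin 4 → ℝ) :
    pd l (fun y => -(c * y m)) x = if l = m then -c else 0 := by
  rw [pd_of_hasFDerivAt (f := fun y => -(c * y m)) ((hasFDerivAt_coord m x).const_mul c).neg l]
  simp [Pi.single_apply, eq_comm]
  split <;> simp

lemma pd_g22 (k : ℝ) (l : Fin 4) (x : Fin 4 → ℝ) :
    pd l (fun y => -Real.exp (-(k * y 1))) x
      = if l = 1 then k * Real.exp (-(k * x 1)) else 0 := by
  have h := (((hasFDerivAt_coord 1 x).const_mul k).neg.exp).neg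
  rw [pd_of_hasFDerivAt (f := fun y => -Real.exp (-(k * y 1))) h l]
  simp [Pi.single_apply, eq_comm]
  split <;> ring

lemma pd_g33 (k : ℝ) (l : Fin 4) (x : Fin 4 → ℝ) :
    pd l (fun y => k ^ 2 * y 2 ^ 2 - Real.exp (k * y 1)) x
      = (if l = 2 then 2 * k ^ 2 * x 2 else 0) - (if l = 1 then k * Real.exp (k * x 1) else 0) := by
  simp only [pow_two]
  have h2 := (((hasFDerivAt_coord 2 x).mul (hasFDerivAt_coord 2 x)).const_mul (k * k)).sub
    (((hasFDerivAt_coord 1 x).const_mul k).exp)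
  rw [pd_of_hasFDerivAt (f := fun y => k * k * (y 2 * y 2) - Real.exp (k * y 1)) h2 l]
  simp [Pi.single_apply, eq_comm]
  split <;> split <;> simp_all <;> ring

set_option maxHeartbeats 2000000 in
/-- Each `η_a` is a Killing vector field of the McLenaghan–Tariq–Tupper
metric: `Σ_k (η_a^k ∂_k g_{ij} + g_{kj} ∂_i η_a^k + g_{ik} ∂_j η_a^k) = 0` on `ℝ⁴`. -/
theorem eta_killing (k : ℝ) (hk : 0 < k) (a i j : Fin 4) (x : Fin 4 → ℝ) :
    ∑ l : Fin 4,
      (η k a x l * pd l (fun y => mttMetric k y i j) x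
        + mttMetric k x l j * pd i (fun y => η k a y l) x
        + mttMetric k x i l * pd j (fun y => η k a y l) x) = 0 := by
  fin_cases a <;> fin_cases i <;> fin_cases j <;>
    simp only [mttMetric, η, Matrix.cons_val_zero, Matrix.cons_val_one, Matrix.head_cons,
      Matrix.cons_val', Matrix.cons_val_fin_one, Matrix.empty_val', Matrix.head_fin_const,
      Matrix.of_apply, Matrix.cons_val_two, Matrix.cons_val_three, Matrix.tail_cons,
      Fin.sum_univ_four] <;>
    simp only [pd_const, pd_cmul, pd_neg_cmul, pd_g22, pd_g33] <;>
    simp [pd_const, pd_cmul, pd_neg_cmul, pd_g22, pd_g33] <;>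
    try ring
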